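/- Let N₁(x,y) = (1−x)(1−y), N₂(x,y) = x(1−y), N₃(x,y) = xy, N₄(x,y) = (1−x)y be the bilinear shape functions on the unit square [0,1]², with vertices x₁ = (0,0), x₂ = (1,0), x₃ = (1,1), x₄ = (0,1) taken counterclockwise (indices modulo 4), edge vectors e_J = x_{J+1} − x_J, rot(a,b) = (b,−a), area |E| = 1, and R_I = (1/2)(rot(e_{I−1}) + rot(e_I)). Then the reduced-integration (one Gauss point at the centroid) FEM stiffness matrix K^red_{IJ} = ∇N_I(1/2, 1/2) · ∇N_J(1/2, 1/2) and the VEM consistency matrix K^c_{IJ} = (1/|E|) R_I · R_J are equal, and both equal (1/2) · [[1, 0, −1, 0], [0, 1, 0, −1], [−1, 0, 1, 0], [0, −1, 0, 1]]. -/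

import Mathlib

open scoped BigOperators

/-- Rotation by −90°: `rot (a, b) = (b, −a)`. -/
def rot (p : ℝ × ℝ) : ℝ × ℝ := (p.2, -p.1)

/-- Edge vector `e_J = x_{J+1} − x_J` of a polygon with vertices indexed mod `n`. -/
def edge (n : ℕ) (x : ZMod n → ℝ × ℝ) (J : ZMod n) : ℝ × ℝ := x (J + 1) - x J

/-- VEM consistency vector `R_I = (1/2)(rot(e_{I−1}) + rot(e_I))`. -/
noncomputable def Rvec (n : ℕ) (x : ZMod n → ℝ × ℝ) (I : ZMod n) : ℝ × ℝ :=
  (1 / 2 : ℝ) • (rot (edge n x (I - 1)) + rot (edge n x I))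

/-- Signed area `|E| = (1/2) ∑_J (x_{J,1} x_{J+1,2} − x_{J+1,1} x_{J,2})`. -/
noncomputable def signedArea (n : ℕ) [NeZero n] (x : ZMod n → ℝ × ℝ) : ℝ :=
  (1 / 2 : ℝ) * ∑ J : ZMod n, ((x J).1 * (x (J + 1)).2 - (x (J + 1)).1 * (x J).2)

/-- Euclidean dot product on `ℝ²`. -/
def dot2 (u w : ℝ × ℝ) : ℝ := u.1 * w.1 + u.2 * w.2

/-- Bilinear shape functions of the unit square `[0,1]²`: `N_I(x_J) = δ_{IJ}`. -/
noncomputable def N : Fin 4 → ℝ × ℝ → ℝ :=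
  ![fun p => (1 - p.1) * (1 - p.2),
    fun p => p.1 * (1 - p.2),
    fun p => p.1 * p.2,
    fun p => (1 - p.1) * p.2]

/-- Vertices `x₁ = (0,0), x₂ = (1,0), x₃ = (1,1), x₄ = (0,1)` of the unit
square, counterclockwise, indexed mod 4. -/
noncomputable def sqVerts : ZMod 4 → ℝ × ℝ := fun J =>
  if J = 0 then (0, 0) else if J = 1 then (1, 0) else if J = 2 then (1, 1) else (0, 1)

private noncomputable def cpt : ℝ × ℝ := ((1:ℝ)/2, (1:ℝ)/2)

private lemma hx : HasFDerivAt (fun p : ℝ × ℝ => p.1) (ContinuousLinearMap.fst ℝ ℝ ℝ) cpt := hasFDerivAt_fst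
private lemma hy : HasFDerivAt (fun p : ℝ × ℝ => p.2) (ContinuousLinearMap.snd ℝ ℝ ℝ) cpt := hasFDerivAt_snd
private lemma hx' : HasFDerivAt (fun p : ℝ × ℝ => 1 - p.1) (-(ContinuousLinearMap.fst ℝ ℝ ℝ)) cpt := by
  simpa using hx.const_sub 1
private lemma hy' : HasFDerivAt (fun p : ℝ × ℝ => 1 - p.2) (-(ContinuousLinearMap.snd ℝ ℝ ℝ)) cpt := by
  simpa using hy.const_sub 1

private lemma fd0 : fderiv ℝ (N 0) cpt = ((1:ℝ)/2) • (-(ContinuousLinearMap.snd ℝ ℝ ℝ)) + ((1:ℝ)/2) • (-(ContinuousLinearMap.fst ℝ ℝ ℝ)) := by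
  have h := hx'.mul hy'
  have e : N 0 = fun p : ℝ × ℝ => (1 - p.1) * (1 - p.2) := rfl
  rw [e, show fderiv ℝ (fun p : ℝ × ℝ => (1 - p.1) * (1 - p.2)) cpt = _ from h.fderiv]; norm_num [cpt]
private lemma fd1 : fderiv ℝ (N 1) cpt = ((1:ℝ)/2) • (-(ContinuousLinearMap.snd ℝ ℝ ℝ)) + ((1:ℝ)/2) • (ContinuousLinearMap.fst ℝ ℝ ℝ) := by
  have h := hx.mul hy'
  have e : N 1 = fun p : ℝ × ℝ => p.1 * (1 - p.2) := rfl
  rw [e, show fderiv ℝ (fun p : ℝ × ℝ => p.1 * (1 - p.2)) cpt = _ from h.fderiv]; norm_num [cpt]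
private lemma fd2 : fderiv ℝ (N 2) cpt = ((1:ℝ)/2) • (ContinuousLinearMap.snd ℝ ℝ ℝ) + ((1:ℝ)/2) • (ContinuousLinearMap.fst ℝ ℝ ℝ) := by
  have h := hx.mul hy
  have e : N 2 = fun p : ℝ × ℝ => p.1 * p.2 := rfl
  rw [e, show fderiv ℝ (fun p : ℝ × ℝ => p.1 * p.2) cpt = _ from h.fderiv]; norm_num [cpt]
private lemma fd3 : fderiv ℝ (N 3) cpt = ((1:ℝ)/2) • (ContinuousLinearMap.snd ℝ ℝ ℝ) + ((1:ℝ)/2) • (-(ContinuousLinearMap.fst ℝ ℝ ℝ)) := by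
  have h := hx'.mul hy
  have e : N 3 = fun p : ℝ × ℝ => (1 - p.1) * p.2 := rfl
  rw [e, show fderiv ℝ (fun p : ℝ × ℝ => (1 - p.1) * p.2) cpt = _ from h.fderiv]; norm_num [cpt]


private lemma fdA0 : (fderiv ℝ (N 0) ((1:ℝ)/2, (1:ℝ)/2)) (1, 0) = (-(1/2) : ℝ) := by
  rw [show (((1:ℝ)/2, (1:ℝ)/2) : ℝ × ℝ) = cpt from rfl, fd0]; simp
private lemma fdB0 : (fderiv ℝ (N 0) ((1:ℝ)/2, (1:ℝ)/2)) (0, 1) = (-(1/2) : ℝ) := by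
  rw [show (((1:ℝ)/2, (1:ℝ)/2) : ℝ × ℝ) = cpt from rfl, fd0]; simp

private lemma fdA1 : (fderiv ℝ (N 1) ((1:ℝ)/2, (1:ℝ)/2)) (1, 0) = (1/2 : ℝ) := by
  rw [show (((1:ℝ)/2, (1:ℝ)/2) : ℝ × ℝ) = cpt from rfl, fd1]; simp
private lemma fdB1 : (fderiv ℝ (N 1) ((1:ℝ)/2, (1:ℝ)/2)) (0, 1) = (-(1/2) : ℝ) := by
  rw [show (((1:ℝ)/2, (1:ℝ)/2) : ℝ × ℝ) = cpt from rfl, fd1]; simp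

private lemma fdA2 : (fderiv ℝ (N 2) ((1:ℝ)/2, (1:ℝ)/2)) (1, 0) = (1/2 : ℝ) := by
  rw [show (((1:ℝ)/2, (1:ℝ)/2) : ℝ × ℝ) = cpt from rfl, fd2]; simp
private lemma fdB2 : (fderiv ℝ (N 2) ((1:ℝ)/2, (1:ℝ)/2)) (0, 1) = (1/2 : ℝ) := by
  rw [show (((1:ℝ)/2, (1:ℝ)/2) : ℝ × ℝ) = cpt from rfl, fd2]; simp

private lemma fdA3 : (fderiv ℝ (N 3) ((1:ℝ)/2, (1:ℝ)/2)) (1, 0) = (-(1/2) : ℝ) := by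
  rw [show (((1:ℝ)/2, (1:ℝ)/2) : ℝ × ℝ) = cpt from rfl, fd3]; simp
private lemma fdB3 : (fderiv ℝ (N 3) ((1:ℝ)/2, (1:ℝ)/2)) (0, 1) = (1/2 : ℝ) := by
  rw [show (((1:ℝ)/2, (1:ℝ)/2) : ℝ × ℝ) = cpt from rfl, fd3]; simp

private lemma sv0 : sqVerts 0 = (0, 0) := rfl
private lemma sv1 : sqVerts 1 = (1, 0) := rfl
private lemma sv2 : sqVerts 2 = (1, 1) := rfl
private lemma sv3 : sqVerts 3 = (0, 1) := rfl

private lemma Rv0 : Rvec 4 sqVerts 0 = (-(1/2), -(1/2)) := by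
  have e1 : (0 : ZMod 4) - 1 = 3 := by decide
  have e2 : (3 : ZMod 4) + 1 = 0 := by decide
  have e3 : (0 : ZMod 4) + 1 = 1 := by decide
  simp [Rvec, edge, rot, e1, e2, e3, sv0, sv1, sv3, Prod.ext_iff]
private lemma Rv1 : Rvec 4 sqVerts 1 = (1/2, -(1/2)) := by
  have e1 : (1 : ZMod 4) - 1 = 0 := by decide
  have e2 : (0 : ZMod 4) + 1 = 1 := by decide
  have e3 : (1 : ZMod 4) + 1 = 2 := by decide
  simp [Rvec, edge, rot, e1, e2, e3, sv0, sv1, sv2, Prod.ext_iff]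
private lemma Rv2 : Rvec 4 sqVerts 2 = (1/2, 1/2) := by
  have e1 : (2 : ZMod 4) - 1 = 1 := by decide
  have e2 : (1 : ZMod 4) + 1 = 2 := by decide
  have e3 : (2 : ZMod 4) + 1 = 3 := by decide
  simp [Rvec, edge, rot, e1, e2, e3, sv1, sv2, sv3, Prod.ext_iff]
private lemma Rv3 : Rvec 4 sqVerts 3 = (-(1/2), 1/2) := by
  have e1 : (3 : ZMod 4) - 1 = 2 := by decide
  have e2 : (2 : ZMod 4) + 1 = 3 := by decide
  have e3 : (3 : ZMod 4) + 1 = 0 := by decide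
  simp [Rvec, edge, rot, e1, e2, e3, sv0, sv2, sv3, Prod.ext_iff]
private lemma areaSq : signedArea 4 sqVerts = 1 := by
  have h : (∑ J : ZMod 4, ((sqVerts J).1 * (sqVerts (J + 1)).2 - (sqVerts (J + 1)).1 * (sqVerts J).2))
      = ((sqVerts 0).1 * (sqVerts (0 + 1)).2 - (sqVerts (0 + 1)).1 * (sqVerts 0).2)
      + ((sqVerts 1).1 * (sqVerts (1 + 1)).2 - (sqVerts (1 + 1)).1 * (sqVerts 1).2)
      + ((sqVerts 2).1 * (sqVerts (2 + 1)).2 - (sqVerts (2 + 1)).1 * (sqVerts 2).2)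
      + ((sqVerts 3).1 * (sqVerts (3 + 1)).2 - (sqVerts (3 + 1)).1 * (sqVerts 3).2) :=
    Fin.sum_univ_four _
  have e0 : (0 : ZMod 4) + 1 = 1 := by decide
  have e1 : (1 : ZMod 4) + 1 = 2 := by decide
  have e2 : (2 : ZMod 4) + 1 = 3 := by decide
  have e3 : (3 : ZMod 4) + 1 = 0 := by decide
  rw [signedArea, h, e0, e1, e2, e3, sv0, sv1, sv2, sv3]
  norm_num

theorem reduced_fem_eq_vem_consistency_unit_square :
    (Matrix.of fun I J : Fin 4 =>
        (fderiv ℝ (N I) ((1:ℝ)/2, (1:ℝ)/2)) (1, 0) *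
          (fderiv ℝ (N J) ((1:ℝ)/2, (1:ℝ)/2)) (1, 0) +
        (fderiv ℝ (N I) ((1:ℝ)/2, (1:ℝ)/2)) (0, 1) *
          (fderiv ℝ (N J) ((1:ℝ)/2, (1:ℝ)/2)) (0, 1))
      = (1 / 2 : ℝ) •
          !![1, 0, -1, 0;
             0, 1, 0, -1;
             -1, 0, 1, 0;
             0, -1, 0, 1] ∧
    (Matrix.of fun I J : Fin 4 =>
        (signedArea 4 sqVerts)⁻¹ *
          dot2 (Rvec 4 sqVerts ((I : ℕ) : ZMod 4)) (Rvec 4 sqVerts ((J : ℕ) : ZMod 4)))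
      = (1 / 2 : ℝ) •
          !![1, 0, -1, 0;
             0, 1, 0, -1;
             -1, 0, 1, 0;
             0, -1, 0, 1] := by
  constructor
  · ext I J
    fin_cases I <;> fin_cases J <;>
      simp only [Matrix.of_apply, fdA0, fdA1, fdA2, fdA3, fdB0, fdB1, fdB2, fdB3,
        Fin.zero_eta, Fin.mk_one, Fin.isValue, Matrix.smul_apply,
        show ((⟨2, by omega⟩ : Fin 4)) = 2 from rfl,
        show ((⟨3, by omega⟩ : Fin 4)) = 3 from rfl] <;>
      simp [Matrix.cons_val, Fin.isValue] <;> norm_num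
  · ext I J
    fin_cases I <;> fin_cases J <;>
      simp only [Matrix.of_apply, areaSq, dot2, Matrix.smul_apply,
        Fin.zero_eta, Fin.mk_one, Fin.isValue,
        show ((⟨2, by omega⟩ : Fin 4)) = 2 from rfl,
        show ((⟨3, by omega⟩ : Fin 4)) = 3 from rfl,
        show (((0 : Fin 4) : ℕ) : ZMod 4) = 0 from rfl,
        show (((1 : Fin 4) : ℕ) : ZMod 4) = 1 from rfl,
        show (((2 : Fin 4) : ℕ) : ZMod 4) = 2 from rfl,
        show (((3 : Fin 4) : ℕ) : ZMod 4) = 3 from rfl,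
        Rv0, Rv1, Rv2, Rv3] <;>
      simp [Matrix.cons_val, Fin.isValue] <;> norm_num
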